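/- Let n ≥ 2 and let G and H be connected simple graphs on the vertex set Fin n that are isomorphic. Define f on the symmetric group S_n of permutations of Fin n by f(σ) = κ(L_G, L_{H^σ}), and let M = {σ ∈ S_n : L_G = L_{H^σ}}, which is nonempty. Then for each fixed σ ∈ S_n, as the real parameter λ → +∞ (over λ > 1), the Gibbs probability λ^{-f(σ)} / ∑_{τ∈S_n} λ^{-f(τ)} converges to 1/|M| if σ ∈ M, and converges to 0 if σ ∉ M; that is, the stationary distribution of the Metropolis chain converges to the uniform distribution over the set of permutations that make H identical to G. -/

import Mathlib

open Matrix Finset Filter Topology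

open scoped Classical

/-- The real Laplacian matrix of a simple graph on `Fin n` (Mathlib's
`SimpleGraph.lapMatrix` with real entries, using classical decidability of adjacency). -/
noncomputable def lapR {n : ℕ} (G : SimpleGraph (Fin n)) : Matrix (Fin n) (Fin n) ℝ :=
  letI := Classical.decRel G.Adj
  G.lapMatrix ℝ

/-- The Rayleigh ratio set
`R(G,H) = {(xᵀ L_G x)/(xᵀ L_H x) : x ∈ ℝⁿ, x ≠ 0, ∑ i, x i = 0}`. -/
def raySet {n : ℕ} (G H : SimpleGraph (Fin n)) : Set ℝ :=
  {r | ∃ x : Fin n → ℝ, x ≠ 0 ∧ ∑ i, x i = 0 ∧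
    r = (x ⬝ᵥ (lapR G) *ᵥ x) / (x ⬝ᵥ (lapR H) *ᵥ x)}

/-- The generalized condition number `κ(L_G, L_H) = sSup R(G,H) · sSup R(H,G)`. -/
noncomputable def condNumber {n : ℕ} (G H : SimpleGraph (Fin n)) : ℝ :=
  sSup (raySet G H) * sSup (raySet H G)

/-- The relabeling `H^σ` of a graph `H` on `Fin n` by a permutation `σ`. -/
def relabel {n : ℕ} (H : SimpleGraph (Fin n)) (σ : Equiv.Perm (Fin n)) :
    SimpleGraph (Fin n) :=
  H.map σ.toEmbedding

section Helpers

lemma quad_continuous {n : ℕ} (A : Matrix (Fin n) (Fin n) ℝ) :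
    Continuous (fun x : Fin n → ℝ => x ⬝ᵥ A *ᵥ x) := by
  unfold dotProduct Matrix.mulVec
  exact continuous_finset_sum _ fun i _ => (continuous_apply i).mul
    (continuous_finset_sum _ fun j _ => continuous_const.mul (continuous_apply j))

lemma quad_smul {n : ℕ} (A : Matrix (Fin n) (Fin n) ℝ) (c : ℝ) (x : Fin n → ℝ) :
    (c • x) ⬝ᵥ A *ᵥ (c • x) = c^2 * (x ⬝ᵥ A *ᵥ x) := by
  rw [smul_dotProduct, Matrix.mulVec_smul, dotProduct_smul]
  simp only [smul_eq_mul]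
  ring

lemma exists_base_vec {n : ℕ} (hn : 2 ≤ n) :
    ∃ y : Fin n → ℝ, y ≠ 0 ∧ ∑ i, y i = 0 := by
  have h0 : (0 : ℕ) < n := by omega
  have h1 : (1 : ℕ) < n := by omega
  set i0 : Fin n := ⟨0, h0⟩
  set i1 : Fin n := ⟨1, h1⟩
  have hne : i0 ≠ i1 := by simp [i0, i1, Fin.ext_iff]
  refine ⟨fun i => if i = i0 then 1 else if i = i1 then -1 else 0, ?_, ?_⟩
  · intro h
    have := congrFun h i0
    simp at this
  · have key : ∀ i : Fin n, (if i = i0 then (1:ℝ) else if i = i1 then -1 else 0)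
        = (if i = i0 then (1:ℝ) else 0) + (if i = i1 then -1 else 0) := by
      intro i
      split_ifs with h h' <;> simp_all
    rw [Finset.sum_congr rfl fun i _ => key i, Finset.sum_add_distrib]
    simp [Finset.sum_ite_eq']

lemma lap_quad_nonneg {n : ℕ} (G : SimpleGraph (Fin n)) (x : Fin n → ℝ) :
    0 ≤ x ⬝ᵥ lapR G *ᵥ x := by
  letI := Classical.decRel G.Adj
  have h := (SimpleGraph.posSemidef_lapMatrix ℝ G).dotProduct_mulVec_nonneg x
  simpa [lapR] using h

lemma lap_quad_pos {n : ℕ} {G : SimpleGraph (Fin n)} (hn : 0 < n) (hG : G.Connected)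
    {x : Fin n → ℝ} (hx : x ≠ 0) (hs : ∑ i, x i = 0) :
    0 < x ⬝ᵥ lapR G *ᵥ x := by
  letI := Classical.decRel G.Adj
  rcases (lap_quad_nonneg G x).lt_or_eq with h | h
  · exact h
  · exfalso
    have h0 : Matrix.toLinearMap₂' ℝ (G.lapMatrix ℝ) x x = 0 := by
      rw [Matrix.toLinearMap₂'_apply']
      exact h.symm ▸ rfl
    rw [SimpleGraph.lapMatrix_toLinearMap₂'_apply'_eq_zero_iff_forall_reachable] at h0
    have hconst : ∀ i, x i = x ⟨0, hn⟩ := fun i => h0 i _ (hG i _)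
    have h2 : (n : ℝ) * x ⟨0, hn⟩ = 0 := by
      rw [← hs, Finset.sum_congr rfl (fun i _ => hconst i)]
      simp [mul_comm]
    have h3 : x ⟨0, hn⟩ = 0 := by
      rcases mul_eq_zero.1 h2 with h' | h'
      · exact absurd h' (by positivity)
      · exact h'
    exact hx (funext fun i => by rw [hconst i, h3]; rfl)

lemma raySet_nonempty {n : ℕ} (hn : 2 ≤ n) (G H : SimpleGraph (Fin n)) :
    (raySet G H).Nonempty := by
  obtain ⟨y, hy0, hys⟩ := exists_base_vec (n := n) hn
  exact ⟨_, y, hy0, hys, rfl⟩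

lemma raySet_pos {n : ℕ} (hn : 2 ≤ n) {G H : SimpleGraph (Fin n)}
    (hG : G.Connected) (hH : H.Connected) {r : ℝ} (hr : r ∈ raySet G H) : 0 < r := by
  obtain ⟨x, hx0, hxs, rfl⟩ := hr
  exact div_pos (lap_quad_pos (by omega) hG hx0 hxs) (lap_quad_pos (by omega) hH hx0 hxs)

lemma raySet_subset_image {n : ℕ} (G H : SimpleGraph (Fin n)) :
    raySet G H ⊆ (fun x : Fin n → ℝ => (x ⬝ᵥ lapR G *ᵥ x) / (x ⬝ᵥ lapR H *ᵥ x)) ''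
      {x : Fin n → ℝ | ∑ i, x i = 0 ∧ ‖x‖ = 1} := by
  rintro r ⟨x, hx0, hxs, rfl⟩
  have hnx : ‖x‖ ≠ 0 := norm_ne_zero_iff.mpr hx0
  refine ⟨‖x‖⁻¹ • x, ⟨?_, ?_⟩, ?_⟩
  · simp only [Pi.smul_apply, smul_eq_mul, ← Finset.mul_sum, hxs, mul_zero]
  · rw [norm_smul, norm_inv, norm_norm, inv_mul_cancel₀ hnx]
  · simp only [quad_smul]
    rw [mul_div_mul_left]
    positivity

lemma raySet_bddAbove {n : ℕ} {G H : SimpleGraph (Fin n)}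
    (hn : 2 ≤ n) (hH : H.Connected) : BddAbove (raySet G H) := by
  have hScpt : IsCompact {x : Fin n → ℝ | ∑ i, x i = 0 ∧ ‖x‖ = 1} := by
    apply Metric.isCompact_of_isClosed_isBounded
    · exact (isClosed_eq (continuous_finset_sum _ fun i _ => continuous_apply i)
        continuous_const).inter (isClosed_eq continuous_norm continuous_const)
    · apply Bornology.IsBounded.subset (Metric.isBounded_closedBall (x := (0 : Fin n → ℝ)) (r := 1))
      rintro x ⟨-, hx⟩
      simp [Metric.mem_closedBall, dist_zero_right, hx]
  have hcont : ContinuousOn (fun x : Fin n → ℝ => (x ⬝ᵥ lapR G *ᵥ x) / (x ⬝ᵥ lapR H *ᵥ x))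
      {x : Fin n → ℝ | ∑ i, x i = 0 ∧ ‖x‖ = 1} := by
    apply ContinuousOn.div ((quad_continuous _).continuousOn) ((quad_continuous _).continuousOn)
    rintro x ⟨hxs, hxn⟩
    exact ne_of_gt (lap_quad_pos (by omega) hH (norm_ne_zero_iff.mp (hxn ▸ one_ne_zero)) hxs)
  exact (hScpt.image_of_continuousOn hcont).bddAbove.mono (raySet_subset_image G H)

lemma quad_symm {n : ℕ} {A : Matrix (Fin n) (Fin n) ℝ} (hA : A.IsSymm) (x y : Fin n → ℝ) :
    x ⬝ᵥ A *ᵥ y = y ⬝ᵥ A *ᵥ x := by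
  rw [Matrix.dotProduct_mulVec, ← Matrix.mulVec_transpose, hA.eq, dotProduct_comm]

lemma lapR_isSymm {n : ℕ} (G : SimpleGraph (Fin n)) : (lapR G).IsSymm := by
  letI := Classical.decRel G.Adj
  exact G.isSymm_lapMatrix ℝ

lemma lapR_mulVec_one {n : ℕ} (G : SimpleGraph (Fin n)) :
    lapR G *ᵥ (fun _ => (1:ℝ)) = 0 := by
  letI := Classical.decRel G.Adj
  exact G.lapMatrix_mulVec_const_eq_zero

lemma lapR_adj {n : ℕ} {G : SimpleGraph (Fin n)} {i j : Fin n} (h : G.Adj i j) :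
    lapR G i j = -1 := by
  letI := Classical.decRel G.Adj
  show (G.degMatrix ℝ - G.adjMatrix ℝ) i j = -1
  simp [Matrix.sub_apply, SimpleGraph.degMatrix, Matrix.diagonal_apply_ne _ (G.ne_of_adj h), h]

lemma lapR_not_adj {n : ℕ} {G : SimpleGraph (Fin n)} {i j : Fin n} (hij : i ≠ j)
    (h : ¬ G.Adj i j) : lapR G i j = 0 := by
  letI := Classical.decRel G.Adj
  show (G.degMatrix ℝ - G.adjMatrix ℝ) i j = 0
  simp [Matrix.sub_apply, SimpleGraph.degMatrix, Matrix.diagonal_apply_ne _ hij, h]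

lemma exists_adj {n : ℕ} (hn : 2 ≤ n) {G : SimpleGraph (Fin n)} (hG : G.Connected) :
    ∃ i j, G.Adj i j := by
  have h0 : (0:ℕ) < n := by omega
  have h1 : (1:ℕ) < n := by omega
  obtain ⟨p⟩ := hG ⟨0,h0⟩ ⟨1,h1⟩
  exact ⟨_, _, p.adj_snd (SimpleGraph.Walk.not_nil_of_ne (by simp [Fin.ext_iff]))⟩

lemma raySet_inv_mem {n : ℕ} {G H : SimpleGraph (Fin n)} {r : ℝ}
    (hr : r ∈ raySet G H) : r⁻¹ ∈ raySet H G := by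
  obtain ⟨x, h0, hs, rfl⟩ := hr
  exact ⟨x, h0, hs, by rw [inv_div]⟩

lemma one_le_condNumber {n : ℕ} (hn : 2 ≤ n) {G H : SimpleGraph (Fin n)}
    (hG : G.Connected) (hH : H.Connected) :
    1 ≤ sSup (raySet G H) * sSup (raySet H G) := by
  obtain ⟨r, hr⟩ := raySet_nonempty hn G H
  have hrpos := raySet_pos hn hG hH hr
  have h1 : r ≤ sSup (raySet G H) := le_csSup (raySet_bddAbove hn hH) hr
  have h2 : r⁻¹ ≤ sSup (raySet H G) := le_csSup (raySet_bddAbove hn hG) (raySet_inv_mem hr)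
  calc (1:ℝ) = r * r⁻¹ := (mul_inv_cancel₀ hrpos.ne').symm
  _ ≤ sSup (raySet G H) * sSup (raySet H G) :=
      mul_le_mul h1 h2 (inv_nonneg.mpr hrpos.le) (hrpos.le.trans h1)

lemma lap_eq_of_condNumber_eq_one {n : ℕ} (hn : 2 ≤ n) {G H : SimpleGraph (Fin n)}
    (hG : G.Connected) (hH : H.Connected)
    (h1 : sSup (raySet G H) * sSup (raySet H G) = 1) : lapR G = lapR H := by
  set S1 := sSup (raySet G H) with hS1def
  obtain ⟨r0, hr0⟩ := raySet_nonempty hn G H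
  have hr0pos := raySet_pos hn hG hH hr0
  have hS1pos : 0 < S1 := lt_of_lt_of_le hr0pos (le_csSup (raySet_bddAbove hn hH) hr0)
  have hS2 : sSup (raySet H G) = S1⁻¹ := by
    field_simp
    linarith [mul_comm S1 (sSup (raySet H G))]
  have hall : ∀ r ∈ raySet G H, r = S1 := by
    intro r hr
    have hrpos := raySet_pos hn hG hH hr
    have hl : r ≤ S1 := le_csSup (raySet_bddAbove hn hH) hr
    have hinv : r⁻¹ ≤ S1⁻¹ := hS2 ▸ le_csSup (raySet_bddAbove hn hG) (raySet_inv_mem hr)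
    have : S1 ≤ r := (inv_le_inv₀ hrpos hS1pos).mp hinv
    linarith
  have hq : ∀ x : Fin n → ℝ, ∑ i, x i = 0 →
      x ⬝ᵥ lapR G *ᵥ x = S1 * (x ⬝ᵥ lapR H *ᵥ x) := by
    intro x hs
    by_cases h0 : x = 0
    · subst h0; simp
    · have := hall _ ⟨x, h0, hs, rfl⟩
      exact (div_eq_iff (lap_quad_pos (by omega) hH h0 hs).ne').mp this
  set D : Matrix (Fin n) (Fin n) ℝ := lapR G - S1 • lapR H with hDdef
  have hDq : ∀ x : Fin n → ℝ, ∑ i, x i = 0 → x ⬝ᵥ D *ᵥ x = 0 := by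
    intro x hs
    rw [hDdef, Matrix.sub_mulVec, dotProduct_sub, Matrix.smul_mulVec,
      dotProduct_smul, smul_eq_mul, hq x hs, sub_self]
  have hDsymm : D.IsSymm := by
    rw [hDdef, Matrix.IsSymm, Matrix.transpose_sub, Matrix.transpose_smul,
      (lapR_isSymm G).eq, (lapR_isSymm H).eq]
  have hbil : ∀ x y : Fin n → ℝ, ∑ i, x i = 0 → ∑ i, y i = 0 → x ⬝ᵥ D *ᵥ y = 0 := by
    intro x y hsx hsy
    have hsum : ∑ i, (x + y) i = 0 := by
      simp only [Pi.add_apply, Finset.sum_add_distrib, hsx, hsy, add_zero]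
    have hexp := hDq _ hsum
    have h2 : x ⬝ᵥ D *ᵥ y = y ⬝ᵥ D *ᵥ x := quad_symm hDsymm x y
    simp only [Matrix.mulVec_add, add_dotProduct, dotProduct_add] at hexp
    rw [hDq x hsx, hDq y hsy] at hexp
    linarith
  have hD1 : D *ᵥ (fun _ => (1:ℝ)) = 0 := by
    rw [hDdef, Matrix.sub_mulVec, Matrix.smul_mulVec, lapR_mulVec_one, lapR_mulVec_one]
    simp
  have hone : ∀ v : Fin n → ℝ, v ⬝ᵥ D *ᵥ (fun _ => (1:ℝ)) = 0 := by
    intro v; rw [hD1]; simp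
  have hone' : ∀ v : Fin n → ℝ, (fun _ => (1:ℝ)) ⬝ᵥ D *ᵥ v = 0 := by
    intro v; rw [quad_symm hDsymm]; exact hone v
  have hnR : (n:ℝ) ≠ 0 := Nat.cast_ne_zero.mpr (by omega)
  have hD0 : D = 0 := by
    ext i j
    have hu : ∀ k : Fin n,
        ∑ l, ((Pi.single k (1:ℝ) - (n:ℝ)⁻¹ • fun _ => (1:ℝ)) : Fin n → ℝ) l = 0 := by
      intro k
      simp only [Pi.sub_apply, Pi.smul_apply, smul_eq_mul, mul_one, Finset.sum_sub_distrib,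
        Finset.sum_pi_single', Finset.mem_univ, if_true, Finset.sum_const, Finset.card_univ,
        Fintype.card_fin, nsmul_eq_mul]
      rw [mul_inv_cancel₀ hnR, sub_self]
    have key := hbil _ _ (hu i) (hu j)
    simp only [Matrix.mulVec_sub, Matrix.mulVec_smul, sub_dotProduct,
      dotProduct_sub, smul_dotProduct, dotProduct_smul,
      hD1, Matrix.mulVec_single_one, single_dotProduct, mul_one, one_mul,
      dotProduct_zero, zero_dotProduct, smul_zero, sub_zero, smul_eq_mul] at key
    rw [show ((fun _ => (1:ℝ)) ⬝ᵥ D.col j) = (fun _ => (1:ℝ)) ⬝ᵥ D *ᵥ Pi.single j 1 by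
      rw [Matrix.mulVec_single_one]] at key
    rw [hone'] at key
    simpa using key
  have hentry : ∀ i j, lapR G i j - S1 * lapR H i j = 0 := by
    intro i j
    have h0 := congrFun (congrFun hD0 i) j
    simpa [hDdef, Matrix.sub_apply, Matrix.smul_apply, smul_eq_mul] using h0
  have hS1eq : S1 = 1 := by
    obtain ⟨i, j, hij⟩ := exists_adj hn hG
    have hGij : lapR G i j = -1 := lapR_adj hij
    by_cases hH' : H.Adj i j
    · have hHij : lapR H i j = -1 := lapR_adj hH'
      have := hentry i j
      rw [hGij, hHij] at this
      linarith
    · have hHij : lapR H i j = 0 := lapR_not_adj (G.ne_of_adj hij) hH'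
      have := hentry i j
      rw [hGij, hHij] at this
      linarith
  ext i j
  have := hentry i j
  rw [hS1eq, one_mul] at this
  linarith

lemma sSup_raySet_eq_one {n : ℕ} (hn : 2 ≤ n) {G H : SimpleGraph (Fin n)}
    (hG : G.Connected) (heq : lapR G = lapR H) : sSup (raySet G H) = 1 := by
  have hset : raySet G H = {1} := by
    ext r
    constructor
    · rintro ⟨x, h0, hs, rfl⟩
      have hpos := lap_quad_pos (show 0 < n by omega) hG h0 hs
      simp [Set.mem_singleton_iff, ← heq, div_self hpos.ne']
    · intro h
      rw [Set.mem_singleton_iff] at h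
      subst h
      obtain ⟨y, hy0, hys⟩ := exists_base_vec hn
      exact ⟨y, hy0, hys, by
        rw [← heq, div_self (lap_quad_pos (show 0 < n by omega) hG hy0 hys).ne']⟩
  rw [hset, csSup_singleton]

lemma gibbs_tendsto {α : Type*} [Fintype α] (f : α → ℝ) (hfa : ∀ a, 1 ≤ f a)
    (M : Set α) (hMne : M.Nonempty) (hMiff : ∀ a, a ∈ M ↔ f a = 1) (σ : α) :
    Filter.Tendsto (fun lam : ℝ => lam ^ (-(f σ)) / ∑ τ, lam ^ (-(f τ))) Filter.atTop
      (𝓝 (if σ ∈ M then 1 / (Nat.card M : ℝ) else 0)) := by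
  have hterm : ∀ τ : α, Filter.Tendsto (fun lam : ℝ => lam ^ (1 - f τ)) Filter.atTop
      (𝓝 (if τ ∈ M then (1:ℝ) else 0)) := by
    intro τ
    by_cases hτ : τ ∈ M
    · have : f τ = 1 := (hMiff τ).mp hτ
      simp [hτ, this]
    · have hlt : 1 < f τ := lt_of_le_of_ne (hfa τ) (fun h => hτ ((hMiff τ).mpr h.symm))
      have := tendsto_rpow_neg_atTop (y := f τ - 1) (by linarith)
      simp only [hτ, if_false]
      convert this using 2 with lam
      ring_nf
  have hden : Filter.Tendsto (fun lam : ℝ => ∑ τ, lam ^ (1 - f τ)) Filter.atTop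
      (𝓝 (Nat.card M : ℝ)) := by
    have h := tendsto_finset_sum Finset.univ (fun τ _ => hterm τ)
    convert h using 2
    rw [Finset.sum_boole]
    rw [Nat.card_eq_fintype_card, ← Set.toFinset_card]
    have : M.toFinset = Finset.univ.filter (· ∈ M) := by ext τ; simp
    rw [this]
  have hcard : (0:ℝ) < (Nat.card M : ℝ) := by
    have : Nonempty ↥M := hMne.to_subtype
    exact_mod_cast Nat.card_pos
  have hmain : Filter.Tendsto (fun lam : ℝ => lam ^ (1 - f σ) / ∑ τ, lam ^ (1 - f τ))
      Filter.atTop (𝓝 (if σ ∈ M then 1 / (Nat.card M : ℝ) else 0)) := by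
    have h := (hterm σ).div hden hcard.ne'
    by_cases hσ : σ ∈ M <;> simp only [hσ, if_true, if_false] at h ⊢
    · exact h
    · rw [zero_div] at h; exact h
  apply hmain.congr'
  filter_upwards [Filter.eventually_gt_atTop (0:ℝ)] with lam hlam
  have hrw : ∀ c : ℝ, lam ^ (1 - c) = lam * lam ^ (-c) := by
    intro c
    rw [show (1 : ℝ) - c = 1 + (-c) by ring, Real.rpow_add hlam, Real.rpow_one]
  simp only [hrw, ← Finset.mul_sum]
  rw [mul_div_mul_left _ _ hlam.ne']

lemma relabel_connected {n : ℕ} {H : SimpleGraph (Fin n)} (hH : H.Connected)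
    (σ : Equiv.Perm (Fin n)) : (relabel H σ).Connected :=
  (SimpleGraph.Iso.map (σ : Fin n ≃ Fin n) H).connected_iff.mp hH

lemma relabel_eq_of_iso {n : ℕ} {G H : SimpleGraph (Fin n)} (e : G ≃g H) :
    relabel H (e.symm.toEquiv : Equiv.Perm (Fin n)) = G := by
  ext a b
  simp only [relabel, SimpleGraph.map_adj, Equiv.toEmbedding_apply]
  constructor
  · rintro ⟨u, v, huv, rfl, rfl⟩
    exact e.symm.map_adj_iff.mpr huv
  · intro hab
    exact ⟨e a, e b, e.map_adj_iff.mpr hab, e.symm_apply_apply a, e.symm_apply_apply b⟩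

end Helpers

/-- Let `n ≥ 2` and let `G`, `H` be connected isomorphic simple graphs on
`Fin n`. Define `f` on the symmetric group by `f σ = κ(L_G, L_{H^σ})`, and let
`M = {σ : L_G = L_{H^σ}}`. Then `M` is nonempty, and for each fixed permutation `σ`, as the
real parameter `λ → +∞` the Gibbs probability `λ^{-f σ} / ∑_τ λ^{-f τ}` converges to
`1/|M|` if `σ ∈ M` and to `0` otherwise; i.e. the stationary distribution of the Metropolis
chain converges to the uniform distribution over the permutations making `H` identical
to `G`. -/
theorem metropolis_stationary_tendsto_uniform_over_isomorphisms
    {n : ℕ} (hn : 2 ≤ n) (G H : SimpleGraph (Fin n))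
    (hG : G.Connected) (hH : H.Connected) (hiso : Nonempty (G ≃g H))
    (f : Equiv.Perm (Fin n) → ℝ) (hf : ∀ σ, f σ = condNumber G (relabel H σ))
    (M : Set (Equiv.Perm (Fin n))) (hM : M = {σ | lapR G = lapR (relabel H σ)})
    (σ : Equiv.Perm (Fin n)) :
    M.Nonempty ∧
      Tendsto
        (fun lam : ℝ => lam ^ (-(f σ)) / ∑ τ : Equiv.Perm (Fin n), lam ^ (-(f τ)))
        atTop (𝓝 (if σ ∈ M then 1 / (Nat.card M : ℝ) else 0)) := by
  obtain ⟨e⟩ := hiso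
  have hMne : M.Nonempty := by
    refine ⟨(e.symm.toEquiv : Equiv.Perm (Fin n)), ?_⟩
    rw [hM]
    show lapR G = lapR (relabel H _)
    rw [relabel_eq_of_iso e]
  have hfa : ∀ τ, 1 ≤ f τ := by
    intro τ
    rw [hf τ]
    exact one_le_condNumber hn hG (relabel_connected hH τ)
  have hMiff : ∀ τ, τ ∈ M ↔ f τ = 1 := by
    intro τ
    rw [hM, Set.mem_setOf_eq, hf τ]
    constructor
    · intro heq
      show sSup (raySet G (relabel H τ)) * sSup (raySet (relabel H τ) G) = 1
      rw [sSup_raySet_eq_one hn hG heq,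
        sSup_raySet_eq_one hn (relabel_connected hH τ) heq.symm, one_mul]
    · intro h1
      exact lap_eq_of_condNumber_eq_one hn hG (relabel_connected hH τ) h1
  exact ⟨hMne, gibbs_tendsto f hfa M hMne hMiff σ⟩
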